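/- Let f = χ_{[0,∞)} on ℝ. For every x ≥ 0, the series ∑_{k ∈ ℤ} |M_{[x-2^k,x)} f(x) − E_k f(x)|² diverges (equals +∞), where M_{[x-2^k,x)} f(x) = 2^{-k} ∫_{x-2^k}^x f and E_k f(x) is the average of f over the dyadic interval of length 2^k containing x. Consequently the square function S_𝓘 f(x) with intervals I_k(x) = [x - 2^k, x) is infinite for every x ≥ 0. -/

import Mathlib

open MeasureTheory Set

/-- Dyadic conditional expectation at scale `2^k`. -/
noncomputable def dyadicE (f : ℝ → ℝ) (k : ℤ) (x : ℝ) : ℝ :=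
  (2:ℝ) ^ (-k) *
    ∫ y in Set.Ico ((⌊x / (2:ℝ) ^ k⌋ : ℝ) * (2:ℝ) ^ k)
      ((⌊x / (2:ℝ) ^ k⌋ + 1 : ℝ) * (2:ℝ) ^ k), f y

/-- The average of `f` over `I_k(x) = [x - 2^k, x)`. -/
noncomputable def avgLeft (f : ℝ → ℝ) (k : ℤ) (x : ℝ) : ℝ :=
  (2:ℝ) ^ (-k) * ∫ y in Set.Ico (x - (2:ℝ) ^ k) x, f y

lemma term_lb (x : ℝ) (hx : 0 ≤ x) (k : ℤ) (hk : 2 * x + 1 ≤ (2:ℝ) ^ k) :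
    (1/4 : ℝ) ≤ |avgLeft (Set.indicator (Set.Ici (0:ℝ)) 1) k x
      - dyadicE (Set.indicator (Set.Ici (0:ℝ)) 1) k x| ^ 2 := by
  have hpos : (0:ℝ) < (2:ℝ) ^ k := by positivity
  -- compute avgLeft
  have havg : avgLeft (Set.indicator (Set.Ici (0:ℝ)) 1) k x = (2:ℝ) ^ (-k) * x := by
    unfold avgLeft
    rw [setIntegral_indicator measurableSet_Ici]
    have hset : Set.Ico (x - (2:ℝ) ^ k) x ∩ Set.Ici 0 = Set.Ico 0 x := by
      rw [Set.Ico_inter_Ici, sup_eq_right.mpr (by nlinarith : x - (2:ℝ) ^ k ≤ 0)]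
    rw [hset]
    simp [Real.volume_Ico, ENNReal.toReal_ofReal hx, hx]
  have hflr : (0:ℝ) ≤ (⌊x / (2:ℝ) ^ k⌋ : ℝ) := by
    exact_mod_cast Int.floor_nonneg.mpr (by positivity)
  have hdy : dyadicE (Set.indicator (Set.Ici (0:ℝ)) 1) k x = 1 := by
    unfold dyadicE
    rw [setIntegral_indicator measurableSet_Ici]
    have hsub : Set.Ico ((⌊x / (2:ℝ) ^ k⌋ : ℝ) * (2:ℝ) ^ k)
        ((⌊x / (2:ℝ) ^ k⌋ + 1 : ℝ) * (2:ℝ) ^ k) ⊆ Set.Ici 0 := fun y hy => by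
      have := hy.1
      have : (0:ℝ) ≤ (⌊x / (2:ℝ) ^ k⌋ : ℝ) * (2:ℝ) ^ k := by positivity
      exact le_trans this hy.1
    rw [Set.inter_eq_left.mpr hsub]
    have hlen : ((⌊x / (2:ℝ) ^ k⌋ + 1 : ℝ) * (2:ℝ) ^ k)
        - ((⌊x / (2:ℝ) ^ k⌋ : ℝ) * (2:ℝ) ^ k) = (2:ℝ) ^ k := by ring
    simp only [Pi.one_apply, integral_const, smul_eq_mul, mul_one, Measure.restrict_apply_univ]
    rw [Measure.real, Measure.restrict_apply_univ, Real.volume_Ico, hlen, ENNReal.toReal_ofReal hpos.le, zpow_neg,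
      inv_mul_cancel₀ hpos.ne']
  rw [havg, hdy]
  have ht : (2:ℝ) ^ (-k) * x ≤ 1/2 := by
    rw [zpow_neg]
    rw [inv_mul_le_iff₀ hpos]
    nlinarith
  have ht0 : (0:ℝ) ≤ (2:ℝ) ^ (-k) * x := by positivity
  rw [abs_of_nonpos (by linarith)]
  nlinarith

/-- for `f = χ_{[0,∞)}` and every `x ≥ 0`, the series
`∑_{k ∈ ℤ} |M_{[x-2^k,x)} f(x) − E_k f(x)|²` diverges to `+∞`; consequently the
square function `S_𝓘 f(x) = (∑_k |...|²)^{1/2}` with `I_k(x) = [x-2^k, x)` is infinite. -/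
theorem stmt2 (f : ℝ → ℝ) (hf : f = Set.indicator (Set.Ici (0:ℝ)) 1)
    (x : ℝ) (hx : 0 ≤ x) :
    (∑' k : ℤ, ENNReal.ofReal (|avgLeft f k x - dyadicE f k x| ^ 2)) = ⊤ ∧
      (∑' k : ℤ, ENNReal.ofReal (|avgLeft f k x - dyadicE f k x| ^ 2)) ^ (1/2 : ℝ) = ⊤ := by
  subst hf
  obtain ⟨n, hn⟩ := pow_unbounded_of_one_lt (2 * x + 1) (by norm_num : (1:ℝ) < 2)
  have key : ∀ m : ℕ, 2 * x + 1 ≤ (2:ℝ) ^ ((n:ℤ) + m) := by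
    intro m
    have h1 : (2:ℝ) ^ (n:ℤ) ≤ (2:ℝ) ^ ((n:ℤ) + m) :=
      zpow_le_zpow_right₀ one_le_two (by omega)
    rw [zpow_natCast] at h1
    linarith
  have hinj : Function.Injective (fun m : ℕ => (n:ℤ) + m) := by
    intro a b h
    simpa using h
  have htop : (∑' k : ℤ, ENNReal.ofReal
      (|avgLeft (Set.indicator (Set.Ici (0:ℝ)) 1) k x
        - dyadicE (Set.indicator (Set.Ici (0:ℝ)) 1) k x| ^ 2)) = ⊤ := by
    rw [eq_top_iff]
    calc (⊤ : ENNReal) = ∑' _ : ℕ, ENNReal.ofReal (1/4 : ℝ) :=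
          (ENNReal.tsum_const_eq_top_of_ne_zero (by simp)).symm
      _ ≤ ∑' m : ℕ, ENNReal.ofReal
          (|avgLeft (Set.indicator (Set.Ici (0:ℝ)) 1) ((n:ℤ) + m) x
            - dyadicE (Set.indicator (Set.Ici (0:ℝ)) 1) ((n:ℤ) + m) x| ^ 2) :=
          ENNReal.tsum_le_tsum fun m =>
            ENNReal.ofReal_le_ofReal (term_lb x hx _ (key m))
      _ ≤ _ := ENNReal.tsum_comp_le_tsum_of_injective hinj _
  exact ⟨htop, by rw [htop]; exact ENNReal.top_rpow_of_pos (by norm_num)⟩
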